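/- (Consistency of the logit adjusted loss.) Fix L ≥ 2, strictly positive class priors π_1,...,π_L, and conditional class-probabilities η ∈ ℝ^L with η_y > 0 for all y and Σ_y η_y = 1. Define C(f) = Σ_y η_y · log( 1 + Σ_{y'≠y} (π_{y'}/π_y)·exp(f_{y'} − f_y) ) for f ∈ ℝ^L. Then C attains its minimum, and every minimizer f* satisfies f*_y − f*_{y'} = log(η_y/π_y) − log(η_{y'}/π_{y'}) for all y, y'; in particular argmax_y f*_y = argmax_y η_y/π_y. -/

import Mathlib

/-- Gibbs inequality: cross entropy is at least entropy. -/
lemma gibbs_le {L : ℕ} (η q : Fin L → ℝ) (hη : ∀ y, 0 < η y) (hq : ∀ y, 0 < q y)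
    (hsη : ∑ y, η y = 1) (hsq : ∑ y, q y = 1) :
    ∑ y, η y * Real.log (q y) ≤ ∑ y, η y * Real.log (η y) := by
  have h : ∑ y, (η y * Real.log (q y) - η y * Real.log (η y)) ≤ ∑ y : Fin L, (q y - η y) := by
    apply Finset.sum_le_sum
    intro y _
    have h1 : η y * Real.log (q y) - η y * Real.log (η y) = η y * Real.log (q y / η y) := by
      rw [Real.log_div (hq y).ne' (hη y).ne']; ring
    rw [h1]
    have h2 : Real.log (q y / η y) ≤ q y / η y - 1 :=
      Real.log_le_sub_one_of_pos (div_pos (hq y) (hη y))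
    calc η y * Real.log (q y / η y) ≤ η y * (q y / η y - 1) := by
          exact mul_le_mul_of_nonneg_left h2 (hη y).le
      _ = q y - η y := by rw [mul_sub, mul_one, ← mul_div_assoc, mul_div_cancel_left₀ _ (hη y).ne']
  rw [Finset.sum_sub_distrib, Finset.sum_sub_distrib, hsη, hsq, sub_self] at h
  linarith

/-- Equality in Gibbs inequality forces the distributions equal. -/
lemma gibbs_eq {L : ℕ} (η q : Fin L → ℝ) (hη : ∀ y, 0 < η y) (hq : ∀ y, 0 < q y)
    (hsη : ∑ y, η y = 1) (hsq : ∑ y, q y = 1)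
    (heq : ∑ y, η y * Real.log (q y) = ∑ y, η y * Real.log (η y)) :
    ∀ y, q y = η y := by
  by_contra hne
  push_neg at hne
  obtain ⟨y0, hy0⟩ := hne
  have h : ∑ y, (η y * Real.log (q y) - η y * Real.log (η y)) < ∑ y : Fin L, (q y - η y) := by
    apply Finset.sum_lt_sum
    · intro y _
      have h1 : η y * Real.log (q y) - η y * Real.log (η y) = η y * Real.log (q y / η y) := by
        rw [Real.log_div (hq y).ne' (hη y).ne']; ring
      rw [h1]
      have h2 : Real.log (q y / η y) ≤ q y / η y - 1 :=
        Real.log_le_sub_one_of_pos (div_pos (hq y) (hη y))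
      calc η y * Real.log (q y / η y) ≤ η y * (q y / η y - 1) :=
            mul_le_mul_of_nonneg_left h2 (hη y).le
        _ = q y - η y := by rw [mul_sub, mul_one, ← mul_div_assoc, mul_div_cancel_left₀ _ (hη y).ne']
    · refine ⟨y0, Finset.mem_univ _, ?_⟩
      have h1 : η y0 * Real.log (q y0) - η y0 * Real.log (η y0)
          = η y0 * Real.log (q y0 / η y0) := by
        rw [Real.log_div (hq y0).ne' (hη y0).ne']; ring
      rw [h1]
      have hne1 : q y0 / η y0 ≠ 1 := fun h =>
        hy0 ((div_eq_one_iff_eq (hη y0).ne').1 h)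
      have h2 : Real.log (q y0 / η y0) < q y0 / η y0 - 1 :=
        Real.log_lt_sub_one_of_pos (div_pos (hq y0) (hη y0)) hne1
      calc η y0 * Real.log (q y0 / η y0) < η y0 * (q y0 / η y0 - 1) :=
            (mul_lt_mul_iff_right₀ (hη y0)).2 h2
        _ = q y0 - η y0 := by rw [mul_sub, mul_one, ← mul_div_assoc, mul_div_cancel_left₀ _ (hη y0).ne']
  rw [Finset.sum_sub_distrib, Finset.sum_sub_distrib, hsη, hsq, sub_self, heq, sub_self] at h
  exact lt_irrefl _ h

/-- Consistency of the logit adjusted softmax cross-entropy (τ = 1) for the balanced error. -/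
theorem logit_adjusted_loss_consistent
    (L : ℕ) (hL : 2 ≤ L)
    (π : Fin L → ℝ) (hπ : ∀ y, 0 < π y)
    (η : Fin L → ℝ) (hη : ∀ y, 0 < η y) (hsum : ∑ y : Fin L, η y = 1)
    (C : (Fin L → ℝ) → ℝ)
    (hC : ∀ f : Fin L → ℝ,
      C f = ∑ y : Fin L, η y *
        Real.log (1 + ∑ y' ∈ Finset.univ.erase y,
          (π y' / π y) * Real.exp (f y' - f y))) :
    (∃ f : Fin L → ℝ, ∀ g : Fin L → ℝ, C f ≤ C g) ∧
    (∀ f : Fin L → ℝ, (∀ g : Fin L → ℝ, C f ≤ C g) →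
      (∀ y y' : Fin L,
        f y - f y' = Real.log (η y / π y) - Real.log (η y' / π y')) ∧
      {y : Fin L | ∀ y' : Fin L, f y' ≤ f y} =
        {y : Fin L | ∀ y' : Fin L, η y' / π y' ≤ η y / π y}) := by
  -- the partition function
  set S : (Fin L → ℝ) → ℝ := fun f => ∑ y, π y * Real.exp (f y) with hSdef
  have hL0 : 0 < L := by omega
  haveI : Nonempty (Fin L) := ⟨⟨0, hL0⟩⟩
  have hne : (Finset.univ : Finset (Fin L)).Nonempty := Finset.univ_nonempty
  have hSpos : ∀ f, 0 < S f := fun f =>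
    Finset.sum_pos (fun y _ => mul_pos (hπ y) (Real.exp_pos _)) hne
  -- the inner expression equals S f / (π y * exp (f y))
  have hA : ∀ (f : Fin L → ℝ) (y : Fin L),
      1 + ∑ y' ∈ Finset.univ.erase y, (π y' / π y) * Real.exp (f y' - f y)
        = S f / (π y * Real.exp (f y)) := by
    intro f y
    have hg : (0:ℝ) < π y * Real.exp (f y) := mul_pos (hπ y) (Real.exp_pos _)
    rw [eq_div_iff hg.ne']
    have : (1 + ∑ y' ∈ Finset.univ.erase y, (π y' / π y) * Real.exp (f y' - f y))
        * (π y * Real.exp (f y))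
        = π y * Real.exp (f y) + ∑ y' ∈ Finset.univ.erase y, π y' * Real.exp (f y') := by
      rw [add_mul, one_mul, Finset.sum_mul]
      congr 1
      apply Finset.sum_congr rfl
      intro y' _
      rw [Real.exp_sub]
      field_simp
      rw [mul_div_cancel_right₀ _ (hπ y).ne']
    rw [this]
    exact Finset.add_sum_erase _ (fun y' => π y' * Real.exp (f y')) (Finset.mem_univ y)
  -- the softmax probabilities
  set q : (Fin L → ℝ) → Fin L → ℝ := fun f y => π y * Real.exp (f y) / S f with hqdef
  have hqpos : ∀ f y, 0 < q f y := fun f y =>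
    div_pos (mul_pos (hπ y) (Real.exp_pos _)) (hSpos f)
  have hqsum : ∀ f, ∑ y, q f y = 1 := by
    intro f
    rw [hqdef]
    simp only
    rw [← Finset.sum_div, hSdef]
    exact div_self (hSpos f).ne'
  -- C f is negative cross-entropy with q f
  have hCq : ∀ f, C f = -∑ y, η y * Real.log (q f y) := by
    intro f
    rw [hC f, ← Finset.sum_neg_distrib]
    apply Finset.sum_congr rfl
    intro y _
    rw [hA f y, hqdef]
    simp only
    rw [Real.log_div (hSpos f).ne' (mul_pos (hπ y) (Real.exp_pos _)).ne',
        Real.log_div (mul_pos (hπ y) (Real.exp_pos _)).ne' (hSpos f).ne']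
    ring
  -- the canonical minimizer
  set fstar : Fin L → ℝ := fun y => Real.log (η y / π y) with hfstar
  have hqstar : ∀ y, q fstar y = η y := by
    have hterm : ∀ y, π y * Real.exp (fstar y) = η y := by
      intro y
      rw [hfstar]
      simp only
      rw [Real.exp_log (div_pos (hη y) (hπ y)), mul_comm, div_mul_cancel₀ _ (hπ y).ne']
    have hSstar : S fstar = 1 := by
      rw [hSdef]
      simp only
      rw [Finset.sum_congr rfl (fun y _ => hterm y), hsum]
    intro y
    rw [hqdef]
    simp only
    rw [hterm y, hSstar, div_one]
  have hCstar : C fstar = -∑ y, η y * Real.log (η y) := by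
    rw [hCq fstar]
    congr 1
    exact Finset.sum_congr rfl (fun y _ => by rw [hqstar y])
  -- fstar is a global minimizer
  have hmin : ∀ g, C fstar ≤ C g := by
    intro g
    rw [hCstar, hCq g, neg_le_neg_iff]
    exact gibbs_le η (q g) hη (hqpos g) hsum (hqsum g)
  refine ⟨⟨fstar, hmin⟩, ?_⟩
  intro f hf
  -- f achieves the same value, so q f = η
  have hCeq : C f = C fstar := le_antisymm (hf fstar) (hmin f)
  have hqeq : ∀ y, q f y = η y := by
    apply gibbs_eq η (q f) hη (hqpos f) hsum (hqsum f)
    have := hCeq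
    rw [hCq f, hCstar, neg_inj] at this
    exact this
  -- hence f y = log (η y / π y) + log (S f)
  have hfy : ∀ y, f y = Real.log (η y / π y) + Real.log (S f) := by
    intro y
    have h1 : π y * Real.exp (f y) = η y * S f := by
      have h0 := hqeq y
      rw [hqdef] at h0
      exact (div_eq_iff (hSpos f).ne').1 h0
    have h2 : Real.exp (f y) = (η y / π y) * S f := by
      rw [div_mul_eq_mul_div, eq_div_iff (hπ y).ne', mul_comm]
      exact h1
    have h3 : f y = Real.log ((η y / π y) * S f) := by
      rw [← h2, Real.log_exp]
    rw [h3, Real.log_mul (div_pos (hη y) (hπ y)).ne' (hSpos f).ne']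
  constructor
  · intro y y'
    rw [hfy y, hfy y']
    ring
  · ext y
    simp only [Set.mem_setOf_eq]
    constructor
    · intro h y'
      have := h y'
      rw [hfy y, hfy y'] at this
      have hlog : Real.log (η y' / π y') ≤ Real.log (η y / π y) := by linarith
      exact (Real.log_le_log_iff (div_pos (hη y') (hπ y')) (div_pos (hη y) (hπ y))).1 hlog
    · intro h y'
      have := h y'
      rw [hfy y, hfy y']
      have hlog : Real.log (η y' / π y') ≤ Real.log (η y / π y) :=
        (Real.log_le_log_iff (div_pos (hη y') (hπ y')) (div_pos (hη y) (hπ y))).2 this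
      linarith
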